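/- Let n ≥ 1 be an integer, N, q ≥ 1 integers, k ≥ 2, and define K₁ = (3(n+1)/2)·(log(Nq(k-1)) + 1/7) and K₂ = (3n/2) + 12. Suppose g(t) = K₁ + K₂·log(n + t + 9/2) for t ≥ 0. Then for any U > 0 and C₀, C₂ > 0, ∫₀^{U/3} g(3t)·C₀ dt + ∫_{U/3}^∞ g(3t)·C₂/(3t)² dt is finite, and with the choice U = √(C₂/C₀), the total is at most (2/3)·√(C₀C₂)·(K₁ + K₂·(log(n + 9/2 + √(C₂/C₀)) + 1/2)). -/

import Mathlib

set_option maxHeartbeats 800000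

open Real MeasureTheory intervalIntegral

private lemma aux_deriv (b c₁ c₂ : ℝ) (hb : 0 < b) :
    ∀ t ∈ Set.Ici b, HasDerivAt (fun t => -(c₁ + c₂ * (Real.log (t / b) + 1)) / t)
      ((c₁ + c₂ * Real.log (t / b)) / t ^ 2) t := by
  intro t ht
  have ht0 : (0:ℝ) < t := lt_of_lt_of_le hb ht
  have hlog : HasDerivAt (fun t : ℝ => Real.log (t / b)) (1 / t) t := by
    have hd : HasDerivAt (fun t : ℝ => t / b) (1 / b) t := (hasDerivAt_id t).div_const b
    have h := (Real.hasDerivAt_log (by positivity : t / b ≠ 0)).comp t hd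
    refine h.congr_deriv ?_
    field_simp
  have h1 : HasDerivAt (fun t : ℝ => -(c₁ + c₂ * (Real.log (t / b) + 1)))
      (-(c₂ * (1 / t))) t := (((hlog.add_const 1).const_mul c₂).const_add c₁).neg
  have := h1.div (hasDerivAt_id t) (ne_of_gt ht0)
  refine this.congr_deriv ?_
  simp only [id]
  field_simp
  ring

private lemma aux_tendsto (b c₁ c₂ : ℝ) (hb : 0 < b) :
    Filter.Tendsto (fun t => -(c₁ + c₂ * (Real.log (t / b) + 1)) / t) Filter.atTop (nhds 0) := by
  have h1 : Filter.Tendsto (fun t : ℝ => Real.log t / t) Filter.atTop (nhds 0) :=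
    Real.isLittleO_log_id_atTop.tendsto_div_nhds_zero
  have h2 : Filter.Tendsto (fun t : ℝ => (1:ℝ) / t) Filter.atTop (nhds 0) := by
    simpa using tendsto_inv_atTop_zero
  have h3 : Filter.Tendsto
      (fun t : ℝ => -c₂ * (Real.log t / t) + (-(c₁ + c₂) + c₂ * Real.log b) * (1 / t))
      Filter.atTop (nhds 0) := by
    have := (h1.const_mul (-c₂)).add (h2.const_mul (-(c₁ + c₂) + c₂ * Real.log b))
    simpa using this
  refine h3.congr' ?_
  filter_upwards [Filter.eventually_gt_atTop 0] with t ht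
  rw [Real.log_div (ne_of_gt ht) (ne_of_gt hb)]
  field_simp
  ring

/-- integrability and value of ∫ (c₁ + c₂ log(t/b))/t² over Ioi b -/
private lemma aux_int (b c₁ c₂ : ℝ) (hb : 0 < b) (hc₁ : 0 ≤ c₁) (hc₂ : 0 ≤ c₂) :
    IntegrableOn (fun t => (c₁ + c₂ * Real.log (t / b)) / t ^ 2) (Set.Ioi b) ∧
    ∫ t in Set.Ioi b, (c₁ + c₂ * Real.log (t / b)) / t ^ 2 = (c₁ + c₂) / b := by
  have hpos : ∀ t ∈ Set.Ioi b, 0 ≤ (c₁ + c₂ * Real.log (t / b)) / t ^ 2 := by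
    intro t ht
    have ht0 : (0:ℝ) < t := lt_trans hb ht
    have : (0:ℝ) ≤ Real.log (t / b) :=
      Real.log_nonneg ((one_le_div hb).2 (le_of_lt ht))
    positivity
  constructor
  · exact integrableOn_Ioi_deriv_of_nonneg' (aux_deriv b c₁ c₂ hb) hpos (aux_tendsto b c₁ c₂ hb)
  · have := integral_Ioi_of_hasDerivAt_of_nonneg' (aux_deriv b c₁ c₂ hb) hpos
      (aux_tendsto b c₁ c₂ hb)
    rw [this]
    rw [div_self (ne_of_gt hb), Real.log_one]
    field_simp
    ring

theorem stmt_16 (n : ℕ) (hn : 1 ≤ n) (N q : ℕ) (hN : 1 ≤ N) (hq : 1 ≤ q)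
    (k : ℕ) (hk : 2 ≤ k)
    (K₁ K₂ : ℝ)
    (hK₁ : K₁ = (3 * ((n : ℝ) + 1) / 2) * (Real.log ((N : ℝ) * q * ((k : ℝ) - 1)) + 1/7))
    (hK₂ : K₂ = 3 * (n : ℝ) / 2 + 12)
    (g : ℝ → ℝ) (hg : ∀ t, g t = K₁ + K₂ * Real.log ((n : ℝ) + t + 9/2))
    (U C₀ C₂ : ℝ) (hU : 0 < U) (hC₀ : 0 < C₀) (hC₂ : 0 < C₂) :
    IntegrableOn (fun t => g (3 * t) * C₂ / (3 * t) ^ 2) (Set.Ioi (U / 3)) ∧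
    (U = Real.sqrt (C₂ / C₀) →
      (∫ t in (0:ℝ)..(U/3), g (3 * t) * C₀) +
        (∫ t in Set.Ioi (U/3), g (3 * t) * C₂ / (3 * t) ^ 2) ≤
      (2/3) * Real.sqrt (C₀ * C₂) *
        (K₁ + K₂ * (Real.log ((n : ℝ) + 9/2 + Real.sqrt (C₂ / C₀)) + 1/2))) := by
  set a : ℝ := (n : ℝ) + 9/2 with ha
  have ha1 : (1:ℝ) ≤ a := by
    have : (1:ℝ) ≤ (n:ℝ) := by exact_mod_cast hn
    simp only [ha]; linarith
  have hK₁0 : 0 ≤ K₁ := by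
    have h1 : (1:ℝ) ≤ (N : ℝ) * q * ((k : ℝ) - 1) := by
      have hN' : (1:ℝ) ≤ (N:ℝ) := by exact_mod_cast hN
      have hq' : (1:ℝ) ≤ (q:ℝ) := by exact_mod_cast hq
      have hk' : (2:ℝ) ≤ (k:ℝ) := by exact_mod_cast hk
      have h12 : (1:ℝ) ≤ (N:ℝ) * q := by nlinarith
      nlinarith
    have := Real.log_nonneg h1
    rw [hK₁]; positivity
  have hK₂0 : (0:ℝ) < K₂ := by rw [hK₂]; positivity
  have hL : 0 ≤ Real.log (a + U) := Real.log_nonneg (by linarith)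
  set L : ℝ := Real.log (a + U) with hLdef
  set c₁ : ℝ := C₂ * (K₁ + K₂ * L) / 9 with hc₁
  set c₂ : ℝ := C₂ * K₂ / 9 with hc₂
  have hc₁0 : 0 ≤ c₁ := by rw [hc₁]; positivity
  have hc₂0 : 0 ≤ c₂ := by rw [hc₂]; positivity
  have hb : (0:ℝ) < U / 3 := by linarith
  obtain ⟨hInt, hVal⟩ := aux_int (U/3) c₁ c₂ hb hc₁0 hc₂0
  -- pointwise bound on Ioi (U/3)
  have hbound : ∀ t ∈ Set.Ioi (U/3),
      g (3 * t) * C₂ / (3 * t) ^ 2 ≤ (c₁ + c₂ * Real.log (t / (U/3))) / t ^ 2 := by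
    intro t ht
    have ht' : U / 3 < t := ht
    have ht0 : 0 < t := lt_trans hb ht'
    have hU3t : U ≤ 3 * t := by linarith
    have hlog : Real.log (a + 3 * t) ≤ L + Real.log (t / (U/3)) := by
      have htU : t / (U/3) = 3 * t / U := by field_simp
      rw [htU, ← Real.log_mul (by linarith : (a:ℝ) + U ≠ 0) (by positivity : 3 * t / U ≠ 0)]
      apply Real.log_le_log (by linarith)
      rw [← sub_nonneg]
      have heq : (a + U) * (3 * t / U) - (a + 3 * t) = a * (3 * t - U) / U := by
        field_simp; ring
      rw [heq]
      exact div_nonneg (mul_nonneg (by linarith) (by linarith)) hU.le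
    have hg3 : g (3 * t) = K₁ + K₂ * Real.log (a + 3 * t) := by
      rw [hg, ha]; ring_nf
    rw [hg3]
    rw [div_le_div_iff₀ (by positivity) (by positivity)]
    have h9 : (3 * t) ^ 2 = 9 * t ^ 2 := by ring
    rw [h9]
    have key : K₁ + K₂ * Real.log (a + 3 * t) ≤ K₁ + K₂ * (L + Real.log (t / (U/3))) := by
      nlinarith
    have hgl : 0 < t ^ 2 := by positivity
    calc (K₁ + K₂ * Real.log (a + 3*t)) * C₂ * t ^ 2
        ≤ (K₁ + K₂ * (L + Real.log (t / (U/3)))) * C₂ * t ^ 2 :=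
          mul_le_mul_of_nonneg_right (mul_le_mul_of_nonneg_right key hC₂.le) (by positivity)
      _ = (c₁ + c₂ * Real.log (t / (U/3))) * (9 * t ^ 2) := by
          rw [hc₁, hc₂]; ring
  have hgnn : ∀ t ∈ Set.Ioi (U/3), 0 ≤ g (3 * t) * C₂ / (3 * t) ^ 2 := by
    intro t ht
    have ht0 : 0 < t := lt_trans hb ht
    have : 0 ≤ Real.log ((n:ℝ) + 3 * t + 9/2) := Real.log_nonneg (by
      have : (1:ℝ) ≤ (n:ℝ) := by exact_mod_cast hn
      linarith)
    rw [hg]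
    positivity
  have hmeas : AEStronglyMeasurable (fun t => g (3 * t) * C₂ / (3 * t) ^ 2)
      (volume.restrict (Set.Ioi (U/3))) := by
    have : (fun t => g (3 * t) * C₂ / (3 * t) ^ 2) =
        (fun t : ℝ => (K₁ + K₂ * Real.log ((n:ℝ) + 3 * t + 9/2)) * C₂ / (3 * t) ^ 2) := by
      funext t; rw [hg]
    rw [this]
    apply Measurable.aestronglyMeasurable
    have m1 : Measurable fun t : ℝ => (n:ℝ) + 3*t + 9/2 := by fun_prop
    have m2 : Measurable fun t : ℝ => (3*t)^2 := by fun_prop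
    exact ((measurable_const.add ((Real.measurable_log.comp m1).const_mul K₂)).mul
      measurable_const).div m2
  have hIntF : IntegrableOn (fun t => g (3 * t) * C₂ / (3 * t) ^ 2) (Set.Ioi (U/3)) := by
    apply Integrable.mono' hInt hmeas
    filter_upwards [ae_restrict_mem measurableSet_Ioi] with t ht
    rw [Real.norm_eq_abs, abs_of_nonneg (hgnn t ht)]
    exact hbound t ht
  refine ⟨hIntF, ?_⟩
  intro hUeq
  -- second integral bound
  have hint2 : (∫ t in Set.Ioi (U/3), g (3 * t) * C₂ / (3 * t) ^ 2) ≤ (c₁ + c₂) / (U/3) := by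
    rw [← hVal]
    exact setIntegral_mono_on hIntF hInt measurableSet_Ioi hbound
  -- first integral bound
  have hcont1 : ContinuousOn (fun t : ℝ => g (3 * t) * C₀) (Set.Icc 0 (U/3)) := by
    have : (fun t : ℝ => g (3 * t) * C₀) =
        (fun t : ℝ => (K₁ + K₂ * Real.log ((n:ℝ) + 3 * t + 9/2)) * C₀) := by
      funext t; rw [hg]
    rw [this]
    apply ContinuousOn.mul _ continuousOn_const
    apply ContinuousOn.add continuousOn_const
    apply ContinuousOn.mul continuousOn_const
    apply ContinuousOn.log
    · fun_prop
    · intro t ht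
      have : (1:ℝ) ≤ (n:ℝ) := by exact_mod_cast hn
      have ht0 : 0 ≤ t := ht.1
      positivity
  have hmono : ∀ t ∈ Set.Icc (0:ℝ) (U/3), g (3 * t) * C₀ ≤ (K₁ + K₂ * L) * C₀ := by
    intro t ht
    have hlog : Real.log ((n:ℝ) + 3 * t + 9/2) ≤ L := by
      apply Real.log_le_log
      · have : (1:ℝ) ≤ (n:ℝ) := by exact_mod_cast hn
        have := ht.1; linarith
      · have := ht.2; simp only [ha]; linarith
    rw [hg]
    exact mul_le_mul_of_nonneg_right
      (by nlinarith [mul_le_mul_of_nonneg_left hlog hK₂0.le]) hC₀.le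
  have hint1 : (∫ t in (0:ℝ)..(U/3), g (3 * t) * C₀) ≤ (U/3) * ((K₁ + K₂ * L) * C₀) := by
    have h1 : (∫ t in (0:ℝ)..(U/3), g (3 * t) * C₀) ≤
        ∫ _t in (0:ℝ)..(U/3), (K₁ + K₂ * L) * C₀ := by
      apply intervalIntegral.integral_mono_on (le_of_lt hb)
      · exact hcont1.intervalIntegrable_of_Icc (le_of_lt hb)
      · exact intervalIntegrable_const
      · exact hmono
    rw [intervalIntegral.integral_const] at h1
    simpa using h1
  -- combine
  have hS : Real.sqrt (C₂ / C₀) = Real.sqrt (C₀ * C₂) / C₀ := by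
    rw [eq_div_iff (ne_of_gt hC₀), ← Real.sqrt_sq (le_of_lt hC₀), ← Real.sqrt_mul (by positivity)]
    congr 1
    field_simp
    rw [Real.sq_sqrt (by positivity)]
  set S : ℝ := Real.sqrt (C₀ * C₂) with hSdef
  have hS0 : 0 < S := Real.sqrt_pos.2 (by positivity)
  have hS2 : S ^ 2 = C₀ * C₂ := Real.sq_sqrt (by positivity)
  have hUC₀ : U * C₀ = S := by rw [hUeq, hS]; exact div_mul_cancel₀ _ (ne_of_gt hC₀)
  have hC₂U : C₂ / U = S := by
    rw [hUeq, hS]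
    rw [div_div_eq_mul_div, div_eq_iff (ne_of_gt hS0)]
    nlinarith
  have hLL : Real.log ((n : ℝ) + 9/2 + Real.sqrt (C₂ / C₀)) = L := by
    rw [hLdef, ← hUeq, ha]
  rw [hLL]
  have e2 : (c₁ + c₂) / (U/3) = (S / 3) * (K₁ + K₂ * L + K₂) := by
    rw [hc₁, hc₂]
    have : C₂ * (K₁ + K₂ * L) / 9 + C₂ * K₂ / 9 = (C₂ / U) * U * (K₁ + K₂ * L + K₂) / 9 := by
      field_simp
    rw [this, hC₂U]
    field_simp
    ring
  have e1 : (U/3) * ((K₁ + K₂ * L) * C₀) = (S / 3) * (K₁ + K₂ * L) := by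
    rw [← hUC₀]; ring
  rw [e2] at hint2
  rw [e1] at hint1
  nlinarith [hint1, hint2]
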